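/- Assume the Framework. Let p be a nonzero polynomial all of whose zeros lie in Ω, with distinct zeros u₁, …, u_k of multiplicities r₁, …, r_k, and let p_H ∈ H be the element with ι p_H = p. For 0 ≤ s ≤ r_i − 1 let k_{s,u_i} ∈ H be the Riesz representer of the bounded functional f ↦ (ι f)^{(s)}(u_i). Then the orthogonal complement of [p_H] (the closed linear span of {S^j p_H : j ≥ 0}) equals the linear span of the finite set {k_{s,u_i} : 1 ≤ i ≤ k, 0 ≤ s ≤ r_i − 1}. -/

import Mathlib

open scoped ComplexInnerProductSpace

/-- A Hilbert space `H` of analytic functions on a bounded domain `Ω ⊆ ℂ` with `0 ∈ Ω`,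
realized by an injective linear map `ι` into functions, satisfying conditions
(P1)–(P4) of Cheng–Mashreghi–Ross, together with its reproducing kernels. -/
structure RKFramework (Ω : Set ℂ) (H : Type*) [NormedAddCommGroup H]
    [InnerProductSpace ℂ H] [CompleteSpace H] where
  /-- `Ω` is open. -/
  isOpen : IsOpen Ω
  /-- `Ω` is connected. -/
  isConnected : IsConnected Ω
  /-- `Ω` is bounded. -/
  isBounded : Bornology.IsBounded Ω
  /-- `0 ∈ Ω`. -/
  zero_mem : (0 : ℂ) ∈ Ω
  /-- the realization of elements of `H` as functions (only values on `Ω` matter). -/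
  ι : H →ₗ[ℂ] (ℂ → ℂ)
  /-- `ι` is injective as a map into functions on `Ω`. -/
  ι_inj : ∀ f g : H, Set.EqOn (ι f) (ι g) Ω → f = g
  /-- each `ι f` is analytic on `Ω`. -/
  analytic : ∀ f : H, DifferentiableOn ℂ (ι f) Ω
  /-- (P1): point evaluation of every derivative is a bounded functional. -/
  eval_bounded : ∀ w ∈ Ω, ∀ j : ℕ, ∃ C : ℝ, ∀ f : H,
    ‖iteratedDerivWithin j (ι f) Ω w‖ ≤ C * ‖f‖
  /-- (P2): the shift operator `S`. -/
  S : H →L[ℂ] H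
  ι_S : ∀ f : H, ∀ z ∈ Ω, ι (S f) z = z * ι f z
  /-- (P3): the monomials `z^j` belong to `H` … -/
  p : ℕ → H
  ι_p : ∀ j : ℕ, ∀ z ∈ Ω, ι (p j) z = z ^ j
  /-- … and the polynomials are dense in `H`. -/
  span_p : (Submodule.span ℂ (Set.range p)).topologicalClosure = ⊤
  /-- (P4): the difference-quotient operators `Q_w`. -/
  Q : ℂ → H →L[ℂ] H
  ι_Q : ∀ w ∈ Ω, ∀ f : H, ∀ z ∈ Ω, z ≠ w → ι (Q w f) z = (ι f z - ι f w) / (z - w)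
  /-- the reproducing kernel `k_w` at `w ∈ Ω` … -/
  k : ℂ → H
  /-- … satisfying `⟪f, k_w⟫ = (ι f)(w)` (with the paper's inner product linear in its
  first slot; Mathlib's inner product is linear in the second slot). -/
  reproducing : ∀ w ∈ Ω, ∀ f : H, ⟪k w, f⟫ = ι f w

variable {Ω : Set ℂ} {H : Type*} [NormedAddCommGroup H] [InnerProductSpace ℂ H] [CompleteSpace H]

/-- `[zf]`: the closed linear span of `{S^n f : n ≥ 1}`. -/
abbrev RKFramework.zspan (F : RKFramework Ω H) (f : H) : Submodule ℂ H :=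
  (Submodule.span ℂ {x | ∃ n : ℕ, 1 ≤ n ∧ x = (F.S ^ n) f}).topologicalClosure

/-- `[f]`: the closed linear span of `{S^n f : n ≥ 0}`. -/
abbrev RKFramework.fullSpan (F : RKFramework Ω H) (f : H) : Submodule ℂ H :=
  (Submodule.span ℂ (Set.range fun n : ℕ => (F.S ^ n) f)).topologicalClosure

/-- The `S`-inner function `J = f − P_{[zf]} f` associated with `f`. -/
noncomputable def RKFramework.J (F : RKFramework Ω H) (f : H) : H :=
  f - ((F.zspan f).orthogonalProjectionOnto f : H)


section AuxHelpers

open Polynomial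

lemma iterDeriv_eval_zero_of_pow_dvd {t : ℂ[X]} {a : ℂ} {m s : ℕ}
    (h : (X - C a) ^ m ∣ t) (hs : s < m) :
    (Polynomial.derivative^[s] t).eval a = 0 := by
  rcases eq_or_ne t 0 with rfl | ht
  · simp
  · have hm : m ≤ t.rootMultiplicity a := (Polynomial.le_rootMultiplicity_iff ht).2 h
    exact Polynomial.isRoot_iterate_derivative_of_lt_rootMultiplicity (lt_of_lt_of_le hs hm)

lemma pow_dvd_of_iterDeriv_eval_zero {t : ℂ[X]} {a : ℂ} {m : ℕ}
    (h : ∀ s < m, (Polynomial.derivative^[s] t).eval a = 0) :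
    (X - C a) ^ m ∣ t := by
  rcases eq_or_ne t 0 with rfl | ht
  · exact dvd_zero _
  rcases Nat.eq_zero_or_pos m with rfl | hm
  · simp
  have h1 : m - 1 < t.rootMultiplicity a := by
    apply Polynomial.lt_rootMultiplicity_of_isRoot_iterate_derivative_of_mem_nonZeroDivisors ht
    · intro s hs
      exact h s (by omega)
    · exact mem_nonZeroDivisors_of_ne_zero
        (Nat.cast_ne_zero.mpr (Nat.factorial_pos _).ne')
  exact (pow_dvd_pow _ (by omega)).trans (t.pow_rootMultiplicity_dvd a)

lemma iteratedDeriv_polyEval (t : ℂ[X]) (s : ℕ) :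
    iteratedDeriv s (fun z => t.eval z) = fun z => (Polynomial.derivative^[s] t).eval z := by
  induction s with
  | zero => simp
  | succ n ih =>
    rw [iteratedDeriv_succ, ih, Function.iterate_succ_apply']
    funext z
    exact Polynomial.deriv (p := Polynomial.derivative^[n] t)

variable {Ω' : Set ℂ} {H' : Type*} [NormedAddCommGroup H'] [InnerProductSpace ℂ H']
  [CompleteSpace H']

lemma RKFramework.ι_S_pow (F : RKFramework Ω' H') (f : H') (n : ℕ) :
    ∀ z ∈ Ω', F.ι ((F.S ^ n) f) z = z ^ n * F.ι f z := by
  induction n with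
  | zero => intro z hz; simp
  | succ n ih =>
    intro z hz
    rw [pow_succ' F.S n]
    rw [ContinuousLinearMap.mul_apply, F.ι_S _ z hz, ih z hz, pow_succ']
    ring

/-- Realization of a polynomial as an element of `H`, via `t ↦ (aeval S t) (p 0)`. -/
noncomputable def RKFramework.realize (F : RKFramework Ω' H') : ℂ[X] →ₗ[ℂ] H' where
  toFun t := Polynomial.aeval (↑F.S : H' →ₗ[ℂ] H') t (F.p 0)
  map_add' a b := by simp [map_add]
  map_smul' a b := by simp

lemma RKFramework.aeval_apply_eq (F : RKFramework Ω' H') (f : H') (n : ℕ) :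
    ((↑F.S : H' →ₗ[ℂ] H') ^ n) f = (F.S ^ n) f := by
  rw [Module.End.pow_apply, FunLike.coe_pow_eq_iterate]
  rfl

lemma RKFramework.realize_def (F : RKFramework Ω' H') (t : ℂ[X]) :
    F.realize t = Polynomial.aeval (↑F.S : H' →ₗ[ℂ] H') t (F.p 0) := rfl

lemma RKFramework.ι_realize (F : RKFramework Ω' H') (t : ℂ[X]) :
    ∀ z ∈ Ω', F.ι (F.realize t) z = t.eval z := by
  induction t using Polynomial.induction_on' with
  | add p q hp hq =>
    intro z hz
    rw [map_add, map_add, Pi.add_apply, hp z hz, hq z hz, eval_add]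
  | monomial n a =>
    intro z hz
    have h1 : F.realize (monomial n a) = a • ((F.S ^ n) (F.p 0)) := by
      rw [realize_def, aeval_monomial, Module.End.mul_apply,
        Module.algebraMap_end_apply, F.aeval_apply_eq]
    rw [h1, map_smul, Pi.smul_apply, F.ι_S_pow _ n z hz, F.ι_p 0 z hz,
      eval_monomial, smul_eq_mul]
    ring

lemma RKFramework.aeval_apply_mem_fullSpan (F : RKFramework Ω' H') (f : H') (t : ℂ[X]) :
    (Polynomial.aeval (↑F.S : H' →ₗ[ℂ] H') t) f ∈ F.fullSpan f := by
  induction t using Polynomial.induction_on' with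
  | add p q hp hq =>
    rw [map_add, LinearMap.add_apply]
    exact add_mem hp hq
  | monomial n a =>
    rw [aeval_monomial, Module.End.mul_apply, Module.algebraMap_end_apply]
    refine Submodule.smul_mem _ _ (Submodule.le_topologicalClosure _ (Submodule.subset_span ?_))
    exact ⟨n, (F.aeval_apply_eq f n).symm⟩

/-- The iterated derivative within `Ω` of an element realized by a polynomial. -/
lemma RKFramework.iteratedDerivWithin_poly (F : RKFramework Ω' H') (f : H') (t : ℂ[X])
    (hf : ∀ z ∈ Ω', F.ι f z = t.eval z) {w : ℂ} (hw : w ∈ Ω') (s : ℕ) :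
    iteratedDerivWithin s (F.ι f) Ω' w = (Polynomial.derivative^[s] t).eval w := by
  have h1 : iteratedDerivWithin s (F.ι f) Ω' w
      = iteratedDerivWithin s (fun z => t.eval z) Ω' w :=
    iteratedDerivWithin_congr (fun z hz => hf z hz) hw
  have h2 : iteratedDerivWithin s (fun z => t.eval z) Ω' w
      = iteratedDeriv s (fun z => t.eval z) w := by
    simp only [iteratedDerivWithin, iteratedDeriv,
      iteratedFDerivWithin_of_isOpen s F.isOpen hw]
  rw [h1, h2, iteratedDeriv_polyEval]

end AuxHelpers

/-- Lemma 4.2: for a nonzero polynomial `q = c ∏ᵢ (X − uᵢ)^{rᵢ}` with distinct zeros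
`uᵢ ∈ Ω` of multiplicities `rᵢ`, realized as `pH ∈ H`, the orthogonal complement of
`[pH]` is the linear span of the kernels `k_{s,uᵢ}`, `0 ≤ s ≤ rᵢ − 1`, where `k_{s,uᵢ}`
represents the functional `f ↦ (ι f)^{(s)}(uᵢ)`. -/
theorem stmt6 (F : RKFramework Ω H)
    (N : ℕ) (u : Fin N → ℂ) (r : Fin N → ℕ)
    (hu : Function.Injective u) (huΩ : ∀ i, u i ∈ Ω) (hr : ∀ i, 1 ≤ r i)
    (c : ℂ) (hc : c ≠ 0) (q : Polynomial ℂ)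
    (hq : q = Polynomial.C c * ∏ i, (Polynomial.X - Polynomial.C (u i)) ^ r i)
    (pH : H) (hpH : ∀ z ∈ Ω, F.ι pH z = q.eval z)
    (ks : Fin N → ℕ → H)
    (hks : ∀ i : Fin N, ∀ s : ℕ, s < r i → ∀ f : H,
      ⟪ks i s, f⟫ = iteratedDerivWithin s (F.ι f) Ω (u i)) :
    (F.fullSpan pH)ᗮ =
      Submodule.span ℂ {x : H | ∃ i : Fin N, ∃ s : ℕ, s < r i ∧ x = ks i s} := by
  classical
  have hΩ := fun i => huΩ i
  -- the product polynomial
  set P : Polynomial ℂ := ∏ i, (Polynomial.X - Polynomial.C (u i)) ^ r i with hP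
  have hPmonic : P.Monic := Polynomial.monic_prod_of_monic _ _
    (fun i _ => (Polynomial.monic_X_sub_C (u i)).pow (r i))
  have hq0 : q ≠ 0 := by
    rw [hq]
    exact mul_ne_zero (Polynomial.C_ne_zero.mpr hc) hPmonic.ne_zero
  -- key computation of inner products with the kernels
  have hker : ∀ (i : Fin N) (s : ℕ), s < r i → ∀ t : Polynomial ℂ,
      ⟪ks i s, F.realize t⟫ = (Polynomial.derivative^[s] t).eval (u i) := by
    intro i s hs t
    rw [hks i s hs, F.iteratedDerivWithin_poly _ t (F.ι_realize t) (huΩ i)]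
  -- q divides t implies realize t ∈ fullSpan pH
  have hrealize_q : F.realize q = pH := by
    apply F.ι_inj
    intro z hz
    rw [F.ι_realize q z hz, hpH z hz]
  have hmem : ∀ t : Polynomial ℂ, q ∣ t → F.realize t ∈ F.fullSpan pH := by
    rintro t ⟨m, rfl⟩
    have : F.realize (q * m) = Polynomial.aeval (↑F.S : H →ₗ[ℂ] H) m (F.realize q) := by
      rw [F.realize_def, F.realize_def, mul_comm, map_mul, Module.End.mul_apply]
    rw [this, hrealize_q]
    exact F.aeval_apply_mem_fullSpan pH m
  -- easy inclusion: span of kernels ⊆ orthogonal complement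
  have easy : Submodule.span ℂ {x : H | ∃ i : Fin N, ∃ s : ℕ, s < r i ∧ x = ks i s}
      ≤ (F.fullSpan pH)ᗮ := by
    rw [Submodule.span_le]
    rintro x ⟨i, s, hs, rfl⟩
    rw [SetLike.mem_coe, Submodule.mem_orthogonal]
    have hclosed : F.fullSpan pH ≤ LinearMap.ker (innerSL ℂ (ks i s) : H →ₗ[ℂ] ℂ) := by
      apply Submodule.topologicalClosure_minimal
      · rw [Submodule.span_le]
        rintro y ⟨n, rfl⟩
        have hy : (F.S ^ n) pH = F.realize (Polynomial.X ^ n * q) := by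
          apply F.ι_inj
          intro z hz
          rw [F.ι_realize _ z hz, F.ι_S_pow pH n z hz, hpH z hz]
          simp
        rw [SetLike.mem_coe, LinearMap.mem_ker]
        have : ⟪ks i s, (F.S ^ n) pH⟫ = 0 := by
          rw [hy, hker i s hs]
          apply iterDeriv_eval_zero_of_pow_dvd _ hs
          refine dvd_mul_of_dvd_right ?_ _
          rw [hq]
          refine dvd_mul_of_dvd_right ?_ _
          exact Finset.dvd_prod_of_mem _ (Finset.mem_univ i)
        exact this
      · exact ContinuousLinearMap.isClosed_ker _
    intro v hv
    have := hclosed hv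
    rw [LinearMap.mem_ker] at this
    rw [← inner_eq_zero_symm]
    exact this
  -- hard inclusion
  refine le_antisymm ?_ easy
  intro g hg
  -- D : derivatives functional, φ : inner with g after realization
  set I := (Σ i : Fin N, Fin (r i)) with hI
  set D : Polynomial ℂ →ₗ[ℂ] (I → ℂ) := LinearMap.pi
    (fun idx : I => (Polynomial.leval (u idx.1)).comp
      ((Polynomial.derivative : Polynomial ℂ →ₗ[ℂ] Polynomial ℂ) ^ (idx.2 : ℕ))) with hD
  have hDapp : ∀ (t : Polynomial ℂ) (idx : I),
      D t idx = (Polynomial.derivative^[(idx.2 : ℕ)] t).eval (u idx.1) := by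
    intro t idx
    rw [hD, LinearMap.pi_apply, LinearMap.comp_apply, Module.End.pow_apply,
      Polynomial.leval_apply]
  set φ : Polynomial ℂ →ₗ[ℂ] ℂ :=
    ((innerSL ℂ g).toLinearMap).comp (F.realize : Polynomial ℂ →ₗ[ℂ] H) with hφ
  have hφapp : ∀ t : Polynomial ℂ, φ t = ⟪g, F.realize t⟫ := fun t => rfl
  have hkerle : LinearMap.ker D ≤ LinearMap.ker φ := by
    intro t ht
    rw [LinearMap.mem_ker] at ht ⊢
    -- q ∣ t
    have hdvd : q ∣ t := by
      have hPdvd : P ∣ t := by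
        refine Finset.prod_dvd_of_coprime ?_ ?_
        · intro i _ j _ hij
          exact (Polynomial.isCoprime_X_sub_C_of_isUnit_sub
            ((sub_ne_zero.mpr (fun h => hij (hu h))).isUnit)).pow
        · intro i _
          apply pow_dvd_of_iterDeriv_eval_zero
          intro s hs
          have := congrFun ht (⟨i, ⟨s, hs⟩⟩ : I)
          rw [hDapp] at this
          exact this
      obtain ⟨m, hm⟩ := hPdvd
      refine ⟨Polynomial.C c⁻¹ * m, ?_⟩
      rw [hq, hm]
      rw [← mul_assoc, mul_comm (Polynomial.C c * P) (Polynomial.C c⁻¹)]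
      rw [← mul_assoc, ← Polynomial.C_mul, inv_mul_cancel₀ hc, Polynomial.C_1, one_mul]
    rw [hφapp]
    have hmem' := hmem t hdvd
    rw [Submodule.mem_orthogonal] at hg
    rw [← inner_eq_zero_symm]
    exact hg _ hmem'
  -- factor φ through D
  have hfact : ∃ ψ : (I → ℂ) →ₗ[ℂ] ℂ, ∀ t : Polynomial ℂ, ψ (D t) = φ t := by
    set φ' : (Polynomial ℂ ⧸ LinearMap.ker D) →ₗ[ℂ] ℂ :=
      Submodule.liftQ (LinearMap.ker D) φ hkerle with hφ'
    set D' : (Polynomial ℂ ⧸ LinearMap.ker D) →ₗ[ℂ] (I → ℂ) :=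
      Submodule.liftQ (LinearMap.ker D) D le_rfl with hD'
    have hD'inj : LinearMap.ker D' = ⊥ :=
      Submodule.ker_liftQ_eq_bot _ _ _ le_rfl
    obtain ⟨L, hL⟩ := D'.exists_leftInverse_of_injective hD'inj
    refine ⟨φ'.comp L, fun t => ?_⟩
    have h1 : D t = D' (Submodule.Quotient.mk t) := rfl
    have h2 : L (D' (Submodule.Quotient.mk t)) = Submodule.Quotient.mk t := by
      have := congrArg (fun f => f (Submodule.Quotient.mk t)) hL
      exact this
    rw [LinearMap.comp_apply, h1, h2]
    rfl
  obtain ⟨ψ, hψ⟩ := hfact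
  -- coefficients
  set cc : I → ℂ := fun idx => ψ (fun j => if idx = j then 1 else 0) with hcc
  have hψsum : ∀ v : I → ℂ, ψ v = ∑ idx : I, v idx * cc idx := by
    intro v
    rw [LinearMap.pi_apply_eq_sum_univ ψ v]
    simp [hcc, smul_eq_mul]
  -- the candidate element
  set h : H := ∑ idx : I, (starRingEnd ℂ) (cc idx) • ks idx.1 (idx.2 : ℕ) with hh
  have hinner : ∀ t : Polynomial ℂ, ⟪h, F.realize t⟫ = ⟪g, F.realize t⟫ := by
    intro t
    rw [hh, sum_inner]
    have e1 : ∀ idx : I, idx ∈ Finset.univ →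
        ⟪(starRingEnd ℂ) (cc idx) • ks idx.1 (idx.2 : ℕ), F.realize t⟫
        = D t idx * cc idx := by
      intro idx _
      rw [inner_smul_left, Complex.conj_conj, hker idx.1 (idx.2 : ℕ) idx.2.isLt t,
        ← hDapp t idx]
      ring
    rw [Finset.sum_congr rfl e1, ← hψsum (D t), hψ t, hφapp]
  have hgh : g = h := by
    have hdense : (Submodule.span ℂ (Set.range F.p))
        ≤ LinearMap.ker (innerSL ℂ (g - h) : H →ₗ[ℂ] ℂ) := by
      rw [Submodule.span_le]
      rintro x ⟨j, rfl⟩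
      have hpj : F.p j = F.realize (Polynomial.X ^ j) := by
        apply F.ι_inj
        intro z hz
        rw [F.ι_realize _ z hz, F.ι_p j z hz]
        simp
      rw [SetLike.mem_coe, LinearMap.mem_ker]
      show ⟪g - h, F.p j⟫ = 0
      rw [hpj, inner_sub_left, hinner, sub_self]
    have htop : (Submodule.span ℂ (Set.range F.p)).topologicalClosure
        ≤ LinearMap.ker (innerSL ℂ (g - h) : H →ₗ[ℂ] ℂ) :=
      Submodule.topologicalClosure_minimal _ hdense (ContinuousLinearMap.isClosed_ker _)
    rw [F.span_p] at htop
    have h0 : ⟪g - h, g - h⟫ = 0 := htop Submodule.mem_top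
    have h1 : g - h = 0 := inner_self_eq_zero.mp h0
    exact sub_eq_zero.mp h1
  rw [hgh]
  refine Submodule.sum_mem _ fun idx _ => Submodule.smul_mem _ _ (Submodule.subset_span ?_)
  exact ⟨idx.1, (idx.2 : ℕ), idx.2.isLt, rfl⟩
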